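/- For f ∈ L¹(ℝ²), the 1D Fourier transform in s of the Radon transform satisfies the Fourier slice theorem: F_s[Rf(θ, ·)](ξ) = F₂[f](ξ Θ_θ), where F₂ is the 2D Fourier transform. -/

import Mathlib

open MeasureTheory

/-- Complex-valued 2D Radon transform. -/
noncomputable def radonC (f : ℝ × ℝ → ℂ) (θ s : ℝ) : ℂ :=
  ∫ t : ℝ, f (s * Real.cos θ + t * Real.sin θ, s * Real.sin θ - t * Real.cos θ)

/-- 1D Fourier transform `F₁g(ξ) = ∫ g(s) e^{-iξs} ds`. -/
noncomputable def fourier1 (g : ℝ → ℂ) (ξ : ℝ) : ℂ :=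
  ∫ s : ℝ, g s * Complex.exp (-Complex.I * (ξ * s : ℝ))

/-- 2D Fourier transform `F₂f(ω) = ∫ f(x) e^{-i x·ω} dx`. -/
noncomputable def fourier2 (f : ℝ × ℝ → ℂ) (ω : ℝ × ℝ) : ℂ :=
  ∫ x : ℝ × ℝ, f x * Complex.exp (-Complex.I * (x.1 * ω.1 + x.2 * ω.2 : ℝ))

noncomputable def rotLM (θ : ℝ) : (ℝ × ℝ) →ₗ[ℝ] (ℝ × ℝ) where
  toFun p := (p.1 * Real.cos θ + p.2 * Real.sin θ, p.1 * Real.sin θ - p.2 * Real.cos θ)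
  map_add' p q := by simp [Prod.ext_iff]; constructor <;> ring
  map_smul' c p := by simp [Prod.ext_iff, Prod.smul_fst, Prod.smul_snd, smul_eq_mul]; constructor <;> ring

lemma rotLM_involutive (θ : ℝ) : Function.Involutive (rotLM θ) := by
  intro p
  simp [rotLM, Prod.ext_iff]
  constructor
  · linear_combination p.1 * Real.sin_sq_add_cos_sq θ
  · linear_combination p.2 * Real.sin_sq_add_cos_sq θ

lemma rotLM_det (θ : ℝ) : LinearMap.det (rotLM θ) = -1 := by
  rw [← LinearMap.det_toMatrix (Module.Basis.finTwoProd ℝ)]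
  rw [Matrix.det_fin_two]
  simp [LinearMap.toMatrix_apply, rotLM, Module.Basis.finTwoProd]
  nlinarith [Real.sin_sq_add_cos_sq θ]

lemma rotLM_measurePreserving (θ : ℝ) :
    MeasurePreserving (rotLM θ) (volume : Measure (ℝ × ℝ)) volume := by
  have hdet : LinearMap.det (rotLM θ) ≠ 0 := by rw [rotLM_det]; norm_num
  refine ⟨((rotLM θ).continuous_of_finiteDimensional).measurable, ?_⟩
  rw [Measure.map_linearMap_addHaar_eq_smul_addHaar _ hdet, rotLM_det]
  norm_num

/-- the Fourier slice theorem: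
`F_s[Rf(θ,·)](ξ) = F₂[f](ξ Θ_θ)` for `f ∈ L¹(ℝ²)`. -/
theorem fourier_slice (f : ℝ × ℝ → ℂ) (hf : Integrable f) (θ ξ : ℝ) :
    fourier1 (fun s => radonC f θ s) ξ
      = fourier2 f (ξ * Real.cos θ, ξ * Real.sin θ) := by
  set c := Real.cos θ with hc
  set sn := Real.sin θ with hsn
  set h : ℝ × ℝ → ℂ :=
    fun x => f x * Complex.exp (-Complex.I * (x.1 * (ξ * c) + x.2 * (ξ * sn) : ℝ)) with hhdef
  have hexp : ∀ r : ℝ, ‖Complex.exp (-Complex.I * (r : ℂ))‖ = 1 := by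
    intro r
    rw [Complex.norm_exp]
    simp
  have hh : Integrable h := by
    have : Integrable (fun x : ℝ × ℝ =>
        Complex.exp (-Complex.I * ((x.1 * (ξ * c) + x.2 * (ξ * sn) : ℝ) : ℂ)) * f x) := by
      refine hf.bdd_mul (c := 1) ?_ (Filter.Eventually.of_forall fun x => le_of_eq (hexp _))
      exact (Complex.continuous_exp.comp (by continuity)).aestronglyMeasurable
    simpa [hhdef, mul_comm] using this
  have hmp := rotLM_measurePreserving θ
  have hemb : MeasurableEmbedding (rotLM θ) := by
    let e : (ℝ × ℝ) ≃ᵐ (ℝ × ℝ) :=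
      ⟨(rotLM_involutive θ).toPerm,
        ((rotLM θ).continuous_of_finiteDimensional).measurable,
        ((rotLM θ).continuous_of_finiteDimensional).measurable⟩
    exact e.measurableEmbedding
  have key : (∫ p : ℝ × ℝ, h (rotLM θ p)) = ∫ x : ℝ × ℝ, h x :=
    hmp.integral_comp hemb h
  have hhcomp : Integrable (fun p : ℝ × ℝ => h (rotLM θ p)) :=
    ((hmp.integrable_comp hh.aestronglyMeasurable).mpr hh)
  have fub : (∫ p : ℝ × ℝ, h (rotLM θ p))
      = ∫ s : ℝ, ∫ t : ℝ, h (rotLM θ (s, t)) := by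
    rw [MeasureTheory.Measure.volume_eq_prod] at hhcomp ⊢
    exact integral_prod _ hhcomp
  have inner : ∀ s : ℝ, (∫ t : ℝ, h (rotLM θ (s, t)))
      = radonC f θ s * Complex.exp (-Complex.I * (ξ * s : ℝ)) := by
    intro s
    have harg : ∀ t : ℝ,
        ((s * c + t * sn) * (ξ * c) + (s * sn - t * c) * (ξ * sn) : ℝ) = ξ * s := by
      intro t
      rw [hc, hsn]
      linear_combination ξ * s * Real.sin_sq_add_cos_sq θ
    have : ∀ t : ℝ, h (rotLM θ (s, t))
        = f (s * c + t * sn, s * sn - t * c) * Complex.exp (-Complex.I * (ξ * s : ℝ)) := by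
      intro t
      simp only [hhdef, rotLM, LinearMap.coe_mk, AddHom.coe_mk, harg t]
      simp only [← hc, ← hsn, harg t]
    rw [integral_congr_ae (Filter.Eventually.of_forall this), integral_mul_const]
    rfl
  simp only [fourier1, fourier2]
  calc (∫ s : ℝ, radonC f θ s * Complex.exp (-Complex.I * (ξ * s : ℝ)))
      = ∫ s : ℝ, ∫ t : ℝ, h (rotLM θ (s, t)) := by
        exact integral_congr_ae (Filter.Eventually.of_forall fun s => (inner s).symm)
    _ = ∫ x : ℝ × ℝ, h x := by rw [← fub, key]
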